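/- Let R be a ring and n a positive integer. If every indecomposable factor ring of R is n-clean, then R is n-clean. (Here, if for every two-sided ideal I of R such that the quotient ring R/I is indecomposable — i.e., R/I is nonzero and its only central idempotents are 0 and 1 — the ring R/I is n-clean, then R itself is n-clean.) -/

import Mathlib

/-- An element `a` of a ring `R` is `n`-clean if it is the sum of an idempotent
and `n` units. -/
def IsNClean {R : Type*} [Ring R] (n : ℕ) (a : R) : Prop :=
  ∃ (e : R) (u : Fin n → Rˣ), IsIdempotentElem e ∧ a = e + ∑ i, (u i : R)

/-- A nonzero ring is indecomposable if its only central idempotents are `0` and `1`. -/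
def IsIndecomposableRing (S : Type*) [Ring S] : Prop :=
  Nontrivial S ∧ ∀ e : S, IsIdempotentElem e → e ∈ Set.center S → e = 0 ∨ e = 1

section Aux

variable {R : Type*} [Ring R]

lemma coe_quot_surj (c : RingCon R) : ∀ q : c.Quotient, ∃ x : R, (x : c.Quotient) = q :=
  fun q => Quotient.inductionOn' q fun x => ⟨x, rfl⟩

lemma mem_iff_coe_zero (I : TwoSidedIdeal R) (x : R) :
    x ∈ I ↔ (x : I.ringCon.Quotient) = 0 := by
  rw [TwoSidedIdeal.mem_iff]
  have : (0 : I.ringCon.Quotient) = ((0 : R) : I.ringCon.Quotient) := rfl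
  rw [this]
  exact (RingCon.eq _).symm

lemma isNClean_quot_iff (n : ℕ) (I : TwoSidedIdeal R) (a : R) :
    IsNClean n (a : I.ringCon.Quotient) ↔ ∃ (e : R) (u v : Fin n → R),
      e * e - e ∈ I ∧ (∀ i, u i * v i - 1 ∈ I ∧ v i * u i - 1 ∈ I) ∧
      a - (e + ∑ i, u i) ∈ I := by
  set Q := I.ringCon.Quotient
  have coe_sum : ∀ (w : Fin n → R), ((∑ i, w i : R) : Q) = ∑ i, ((w i : R) : Q) :=
    fun w => map_sum I.ringCon.mk' w Finset.univ
  constructor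
  · rintro ⟨E, U, hE, ha⟩
    obtain ⟨e, he⟩ := coe_quot_surj I.ringCon E
    choose u hu using fun i => coe_quot_surj I.ringCon ((U i : Q))
    choose v hv using fun i => coe_quot_surj I.ringCon (((U i)⁻¹ : Qˣ) : Q)
    refine ⟨e, u, v, ?_, fun i => ⟨?_, ?_⟩, ?_⟩
    · rw [mem_iff_coe_zero]
      push_cast
      rw [he, sub_eq_zero]
      exact hE
    · rw [mem_iff_coe_zero]
      push_cast
      rw [hu, hv, sub_eq_zero]
      exact_mod_cast (U i).mul_inv
    · rw [mem_iff_coe_zero]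
      push_cast
      rw [hu, hv, sub_eq_zero]
      exact_mod_cast (U i).inv_mul
    · rw [mem_iff_coe_zero]
      push_cast
      rw [sub_eq_zero, he]
      simpa only [hu] using ha
  · rintro ⟨e, u, v, he, huv, ha⟩
    rw [mem_iff_coe_zero] at he ha
    refine ⟨(e : Q), fun i => ⟨((u i : R) : Q), ((v i : R) : Q), ?_, ?_⟩, ?_, ?_⟩
    · have := (mem_iff_coe_zero I _).mp (huv i).1
      push_cast at this ⊢
      rw [sub_eq_zero] at this
      exact this
    · have := (mem_iff_coe_zero I _).mp (huv i).2
      push_cast at this ⊢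
      rw [sub_eq_zero] at this
      exact this
    · show (e : Q) * (e : Q) = (e : Q)
      push_cast at he
      rw [sub_eq_zero] at he
      exact_mod_cast he
    · push_cast at ha
      rw [sub_eq_zero] at ha
      exact ha

lemma chain_absorb {C : Set (TwoSidedIdeal R)} (hC : IsChain (· ≤ ·) C) (hne : C.Nonempty) :
    ∀ (k : ℕ) (w : Fin k → R), (∀ j, ∃ I ∈ C, w j ∈ I) → ∃ I ∈ C, ∀ j, w j ∈ I := by
  intro k
  induction k with
  | zero =>
    intro w _
    obtain ⟨I, hI⟩ := hne
    exact ⟨I, hI, fun j => j.elim0⟩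
  | succ m ih =>
    intro w hw
    obtain ⟨I, hIC, hI⟩ := ih (fun j => w j.succ) (fun j => hw j.succ)
    obtain ⟨J, hJC, hJ⟩ := hw 0
    obtain ⟨K, hKC, hIK, hJK⟩ := hC.directedOn I hIC J hJC
    exact ⟨K, hKC, fun j => Fin.cases (hJK hJ) (fun i => hIK (hI i)) j⟩

lemma corner_mul {Q : Type*} [Ring Q] {c : Q} (hc : ∀ g, g * c = c * g) (x y c' : Q) :
    (x * c) * (y * c') = (x * y) * (c * c') := by
  rw [mul_assoc, ← mul_assoc c y, ← hc y, mul_assoc y, ← mul_assoc]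

end Aux

/-- if every indecomposable factor ring of `R` (i.e. every quotient of `R` by a
two-sided ideal which is an indecomposable ring) is `n`-clean, then `R` is `n`-clean. -/
theorem stmt_3 {R : Type*} [Ring R] (n : ℕ) (hn : 0 < n)
    (h : ∀ I : TwoSidedIdeal R, IsIndecomposableRing I.ringCon.Quotient →
      ∀ a : I.ringCon.Quotient, IsNClean n a) :
    ∀ a : R, IsNClean n a := by
  intro a
  by_contra hcon
  classical
  set S : Set (TwoSidedIdeal R) :=
    {I | ¬ IsNClean n (a : I.ringCon.Quotient)} with hS
  -- ⊥ ∈ S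
  have hbot : (⊥ : TwoSidedIdeal R) ∈ S := by
    intro hcl
    rw [isNClean_quot_iff] at hcl
    obtain ⟨e, u, v, he, huv, ha⟩ := hcl
    simp only [TwoSidedIdeal.mem_bot, sub_eq_zero] at he huv ha
    exact hcon ⟨e, fun i => ⟨u i, v i, (huv i).1, (huv i).2⟩, he, ha⟩
  -- chains have upper bounds in S
  have hchain : ∀ C ⊆ S, IsChain (· ≤ ·) C → ∀ y ∈ C, ∃ ub ∈ S, ∀ z ∈ C, z ≤ ub := by
    intro C hCS hC y hy
    have hne : C.Nonempty := ⟨y, hy⟩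
    set carrier : Set R := ⋃ I ∈ C, (I : Set R) with hcar
    have memcar : ∀ x : R, x ∈ carrier ↔ ∃ I ∈ C, x ∈ I := by
      intro x; simp [hcar]
    refine ⟨TwoSidedIdeal.mk' carrier ?_ ?_ ?_ ?_ ?_, ?_, ?_⟩
    · exact (memcar 0).mpr ⟨y, hy, TwoSidedIdeal.zero_mem y⟩
    · intro x z hx hz
      obtain ⟨I, hIC, hxI⟩ := (memcar x).mp hx
      obtain ⟨J, hJC, hzJ⟩ := (memcar z).mp hz
      obtain ⟨K, hKC, hIK, hJK⟩ := hC.directedOn I hIC J hJC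
      exact (memcar _).mpr ⟨K, hKC, TwoSidedIdeal.add_mem K (hIK hxI) (hJK hzJ)⟩
    · intro x hx
      obtain ⟨I, hIC, hxI⟩ := (memcar x).mp hx
      exact (memcar _).mpr ⟨I, hIC, TwoSidedIdeal.neg_mem I hxI⟩
    · intro x z hz
      obtain ⟨I, hIC, hzI⟩ := (memcar z).mp hz
      exact (memcar _).mpr ⟨I, hIC, TwoSidedIdeal.mul_mem_left I _ _ hzI⟩
    · intro x z hx
      obtain ⟨I, hIC, hxI⟩ := (memcar x).mp hx
      exact (memcar _).mpr ⟨I, hIC, TwoSidedIdeal.mul_mem_right I _ _ hxI⟩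
    · -- the union is in S
      intro hcl
      rw [isNClean_quot_iff] at hcl
      obtain ⟨e, u, v, he, huv, ha⟩ := hcl
      simp only [TwoSidedIdeal.mem_mk', memcar] at he huv ha
      -- collect all membership witnesses into a common ideal
      have h1 : ∃ I ∈ C, ∀ i, u i * v i - 1 ∈ I :=
        chain_absorb hC hne n _ (fun i => (huv i).1)
      have h2 : ∃ I ∈ C, ∀ i, v i * u i - 1 ∈ I :=
        chain_absorb hC hne n _ (fun i => (huv i).2)
      obtain ⟨I1, hI1C, hI1⟩ := h1
      obtain ⟨I2, hI2C, hI2⟩ := h2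
      obtain ⟨I3, hI3C, hI3⟩ := he
      obtain ⟨I4, hI4C, hI4⟩ := ha
      obtain ⟨J1, hJ1C, hle1, hle2⟩ := hC.directedOn I1 hI1C I2 hI2C
      obtain ⟨J2, hJ2C, hle3, hle4⟩ := hC.directedOn I3 hI3C I4 hI4C
      obtain ⟨K, hKC, hle5, hle6⟩ := hC.directedOn J1 hJ1C J2 hJ2C
      have hK : ¬ IsNClean n (a : K.ringCon.Quotient) := hCS hKC
      apply hK
      rw [isNClean_quot_iff]
      exact ⟨e, u, v, hle6 (hle3 hI3), fun i => ⟨hle5 (hle1 (hI1 i)), hle5 (hle2 (hI2 i))⟩,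
        hle6 (hle4 hI4)⟩
    · -- upper bound
      intro z hz
      rw [TwoSidedIdeal.le_iff, TwoSidedIdeal.coe_mk']
      exact fun x hx => (memcar x).mpr ⟨z, hz, hx⟩
  obtain ⟨M, _, hMS, hMmax⟩ := zorn_le_nonempty₀ S hchain ⊥ hbot
  set Q := M.ringCon.Quotient with hQ
  have hMa : ¬ IsNClean n (a : Q) := hMS
  -- Q is nontrivial
  have hQnt : Nontrivial Q := by
    by_contra hno
    rw [not_nontrivial_iff_subsingleton] at hno
    exact hMa ⟨0, fun _ => 1, by simp [IsIdempotentElem], Subsingleton.elim _ _⟩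
  -- Q is not indecomposable, so it has a nontrivial central idempotent
  have hnotind : ¬ IsIndecomposableRing Q := fun hind => hMa (h M hind _)
  rw [IsIndecomposableRing] at hnotind
  push_neg at hnotind
  obtain ⟨e, hee, hecen, he0, he1⟩ := hnotind hQnt
  have hcomm : ∀ g : Q, g * e = e * g := Semigroup.mem_center_iff.mp hecen
  have hcomm' : ∀ g : Q, g * (1 - e) = (1 - e) * g := by
    intro g; rw [mul_sub, sub_mul, mul_one, one_mul, hcomm]
  have hee' : e * e = e := hee
  have hmul1 : (1 - e) * (1 - e) = (1 - e) := by
    rw [sub_mul, one_mul, mul_sub, mul_one, hee']; abel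
  have hmul2 : (1 - e) * e = 0 := by rw [sub_mul, one_mul, hee', sub_self]
  have hmul3 : e * (1 - e) = 0 := by rw [mul_sub, mul_one, hee', sub_self]
  -- the two ideals
  have mkI : ∀ c : Q, (∀ g : Q, g * c = c * g) →
      ∃ I : TwoSidedIdeal R, ∀ x : R, x ∈ I ↔ (x : Q) * c = 0 := by
    intro c hc
    refine ⟨TwoSidedIdeal.mk' {x : R | (x : Q) * c = 0} (by simp) ?_ ?_ ?_ ?_, ?_⟩
    · intro x y hx hy
      simp only [Set.mem_setOf_eq] at hx hy ⊢
      push_cast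
      rw [add_mul, hx, hy, add_zero]
    · intro x hx
      simp only [Set.mem_setOf_eq] at hx ⊢
      push_cast
      rw [neg_mul, hx, neg_zero]
    · intro x y hy
      simp only [Set.mem_setOf_eq] at hy ⊢
      push_cast
      rw [mul_assoc, hy, mul_zero]
    · intro x y hx
      simp only [Set.mem_setOf_eq] at hx ⊢
      push_cast
      rw [mul_assoc, hc, ← mul_assoc, hx, zero_mul]
    · intro x
      rw [TwoSidedIdeal.mem_mk']
      exact Iff.rfl
  obtain ⟨I1, hI1⟩ := mkI (1 - e) hcomm'
  obtain ⟨I2, hI2⟩ := mkI e hcomm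
  -- M ≤ I1, M ≤ I2
  have hMI1 : M ≤ I1 := by
    rw [TwoSidedIdeal.le_iff]
    intro x hx
    rw [SetLike.mem_coe, mem_iff_coe_zero] at hx
    rw [SetLike.mem_coe, hI1, hx, zero_mul]
  have hMI2 : M ≤ I2 := by
    rw [TwoSidedIdeal.le_iff]
    intro x hx
    rw [SetLike.mem_coe, mem_iff_coe_zero] at hx
    rw [SetLike.mem_coe, hI2, hx, zero_mul]
  -- I1 ≠ M and I2 ≠ M
  obtain ⟨f, hf⟩ := coe_quot_surj M.ringCon e
  obtain ⟨g, hg⟩ := coe_quot_surj M.ringCon (1 - e)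
  have hI1ne : I1 ≠ M := by
    intro heq
    apply he0
    have hfI1 : f ∈ I1 := by rw [hI1, hf, hmul3]
    rw [heq, mem_iff_coe_zero, hf] at hfI1
    exact hfI1
  have hI2ne : I2 ≠ M := by
    intro heq
    apply he1
    have hgI2 : g ∈ I2 := by rw [hI2, hg, hmul2]
    rw [heq, mem_iff_coe_zero, hg, sub_eq_zero] at hgI2
    exact hgI2.symm
  -- by maximality, a is n-clean mod I1 and mod I2
  have hclean : ∀ I : TwoSidedIdeal R, M ≤ I → I ≠ M → IsNClean n (a : I.ringCon.Quotient) := by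
    intro I hle hne
    by_contra hnc
    exact hne (le_antisymm (hMmax hnc hle) hle)
  obtain ⟨e1, u1, v1, he1', huv1, ha1⟩ := (isNClean_quot_iff n I1 a).mp (hclean I1 hMI1 hI1ne)
  obtain ⟨e2, u2, v2, he2', huv2, ha2⟩ := (isNClean_quot_iff n I2 a).mp (hclean I2 hMI2 hI2ne)
  -- translate the memberships to equations in Q
  rw [hI1] at he1' ha1
  rw [hI2] at he2' ha2
  have huv1' := fun i => And.intro ((hI1 _).mp (huv1 i).1) ((hI1 _).mp (huv1 i).2)
  have huv2' := fun i => And.intro ((hI2 _).mp (huv2 i).1) ((hI2 _).mp (huv2 i).2)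
  -- build the n-clean decomposition of a in Q
  apply hMa
  set A : Q := (e1 : Q) with hA
  set B : Q := (e2 : Q) with hB
  set E : Q := A * (1 - e) + B * e with hE
  have hcornerE : E * E = E := by
    rw [hE, add_mul, mul_add, mul_add, corner_mul hcomm', corner_mul hcomm',
      corner_mul hcomm, corner_mul hcomm, hmul1, hmul2, hmul3, hee', mul_zero, mul_zero,
      add_zero, zero_add]
    have hA2 : (A * A) * (1 - e) = A * (1 - e) := by
      have : (A * A - A) * (1 - e) = 0 := by
        have := he1'
        push_cast at this
        exact this
      rw [sub_mul, sub_eq_zero] at this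
      exact this
    have hB2 : (B * B) * e = B * e := by
      have : (B * B - B) * e = 0 := by
        have := he2'
        push_cast at this
        exact this
      rw [sub_mul, sub_eq_zero] at this
      exact this
    rw [hA2, hB2]
  set U : Fin n → Q := fun i => ((u1 i : R) : Q) * (1 - e) + ((u2 i : R) : Q) * e with hU
  set V : Fin n → Q := fun i => ((v1 i : R) : Q) * (1 - e) + ((v2 i : R) : Q) * e with hV
  have hUV : ∀ i, U i * V i = 1 := by
    intro i
    rw [hU, hV]
    simp only
    rw [add_mul, mul_add, mul_add, corner_mul hcomm', corner_mul hcomm',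
      corner_mul hcomm, corner_mul hcomm, hmul1, hmul2, hmul3, hee', mul_zero, mul_zero,
      add_zero, zero_add]
    have h1 : (((u1 i : R) : Q) * ((v1 i : R) : Q)) * (1 - e) = 1 * (1 - e) := by
      have := (huv1' i).1
      push_cast at this
      rw [sub_mul, sub_eq_zero] at this
      exact this
    have h2 : (((u2 i : R) : Q) * ((v2 i : R) : Q)) * e = 1 * e := by
      have := (huv2' i).1
      push_cast at this
      rw [sub_mul, sub_eq_zero] at this
      exact this
    rw [h1, h2, one_mul, one_mul]
    abel
  have hVU : ∀ i, V i * U i = 1 := by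
    intro i
    rw [hU, hV]
    simp only
    rw [add_mul, mul_add, mul_add, corner_mul hcomm', corner_mul hcomm',
      corner_mul hcomm, corner_mul hcomm, hmul1, hmul2, hmul3, hee', mul_zero, mul_zero,
      add_zero, zero_add]
    have h1 : (((v1 i : R) : Q) * ((u1 i : R) : Q)) * (1 - e) = 1 * (1 - e) := by
      have := (huv1' i).2
      push_cast at this
      rw [sub_mul, sub_eq_zero] at this
      exact this
    have h2 : (((v2 i : R) : Q) * ((u2 i : R) : Q)) * e = 1 * e := by
      have := (huv2' i).2
      push_cast at this
      rw [sub_mul, sub_eq_zero] at this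
      exact this
    rw [h1, h2, one_mul, one_mul]
    abel
  refine ⟨E, fun i => ⟨U i, V i, hUV i, hVU i⟩, hcornerE, ?_⟩
  -- a = E + ∑ U i in Q
  have coe_sum1 : ((∑ i, u1 i : R) : Q) = ∑ i, ((u1 i : R) : Q) :=
    map_sum M.ringCon.mk' u1 Finset.univ
  have coe_sum2 : ((∑ i, u2 i : R) : Q) = ∑ i, ((u2 i : R) : Q) :=
    map_sum M.ringCon.mk' u2 Finset.univ
  have ha1' : (a : Q) * (1 - e) = (A + ∑ i, ((u1 i : R) : Q)) * (1 - e) := by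
    have := ha1
    push_cast at this
    rw [sub_mul, sub_eq_zero] at this
    rw [this]
  have ha2' : (a : Q) * e = (B + ∑ i, ((u2 i : R) : Q)) * e := by
    have := ha2
    push_cast at this
    rw [sub_mul, sub_eq_zero] at this
    rw [this]
  have key : (a : Q) = (a : Q) * (1 - e) + (a : Q) * e := by
    rw [mul_sub, mul_one]; abel
  rw [key, ha1', ha2']
  simp only [hU]
  rw [Finset.sum_add_distrib, ← Finset.sum_mul, ← Finset.sum_mul, add_mul, add_mul, hE]
  abel
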